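/- arXiv:2207.08904 — 2 statements merged into one kernel-verified Lean document; each statement's English description precedes it below -/
import Mathlib

section
/- Under hypotheses (Q1)–(Q5), for every a ∈ Γ there exists a nonzero f ∈ W such that V_t(f) = a for every t ∈ F. (This is the theorem that for a balanced Seshadri stratification, each element of the common fan of monoids admits a single function which simultaneously represents the corresponding one-dimensional leaf of the quasi-valuation for every linearization of the partial order; it shows that requiring a common leaf basis in the definition of a balanced stratification is redundant.) -/
/-- The lexicographic order on `ℚ^A` determined by a linear order `t` on `A`:
`u ≤_t v` iff `u = v`, or `u p < v p` where `p` is the `t`-largest element at which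
`u` and `v` differ (equivalently, `u p < v p` and `u`, `v` agree at all `t`-larger elements). -/
def lexLe {A : Type*} (t : LinearOrder A) (u v : A → ℚ) : Prop :=
  u = v ∨ ∃ p, u p < v p ∧ ∀ q, t.lt p q → u q = v q

/-- The strict lexicographic order determined by `t`. -/
def lexLt {A : Type*} (t : LinearOrder A) (u v : A → ℚ) : Prop :=
  lexLe t u v ∧ u ≠ v

section Lex
variable {A : Type*} [Fintype A] (t : LinearOrder A)

set_option linter.unusedSectionVars false

lemma exists_top_diff {u v : A → ℚ} (h : u ≠ v) :
    ∃ p, u p ≠ v p ∧ ∀ q, t.lt p q → u q = v q := by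
  classical
  letI := t
  set s : Finset A := Finset.univ.filter (fun p => u p ≠ v p) with hs
  have hne : s.Nonempty := by
    rcases Function.ne_iff.mp h with ⟨p, hp⟩
    exact ⟨p, by simp [hs, hp]⟩
  refine ⟨s.max' hne, ?_, ?_⟩
  · have := s.max'_mem hne
    simpa [hs] using this
  · intro q hq
    by_contra hne2
    have hqs : q ∈ s := by simp [hs, hne2]
    exact absurd (s.le_max' q hqs) (not_le.mpr hq)

lemma lexLt_or_lexLt {u v : A → ℚ} (h : u ≠ v) : lexLt t u v ∨ lexLt t v u := by
  obtain ⟨p, hp, hp2⟩ := exists_top_diff t h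
  rcases lt_or_gt_of_ne hp with h1 | h1
  · exact Or.inl ⟨Or.inr ⟨p, h1, hp2⟩, h⟩
  · exact Or.inr ⟨Or.inr ⟨p, h1, fun q hq => (hp2 q hq).symm⟩, h.symm⟩

lemma lexLe_antisymm {u v : A → ℚ} (h1 : lexLe t u v) (h2 : lexLe t v u) : u = v := by
  letI := t
  by_contra hne
  rcases h1 with h1 | ⟨p, hp, hpa⟩
  · exact hne h1
  rcases h2 with h2 | ⟨q, hq, hqa⟩
  · exact hne h2.symm
  rcases lt_trichotomy p q with h | rfl | h
  · exact absurd (hpa q h) (ne_of_gt hq)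
  · exact absurd hq (not_lt.mpr hp.le)
  · exact absurd (hqa p h) (ne_of_gt hp)

lemma lexLe_trans {u v w : A → ℚ} (h1 : lexLe t u v) (h2 : lexLe t v w) : lexLe t u w := by
  letI := t
  rcases h1 with rfl | ⟨p, hp, hpa⟩
  · exact h2
  rcases h2 with rfl | ⟨q, hq, hqa⟩
  · exact Or.inr ⟨p, hp, hpa⟩
  rcases lt_trichotomy p q with h | rfl | h
  · exact Or.inr ⟨q, (hpa q h) ▸ hq,
      fun r hr => (hpa r (h.trans hr)).trans (hqa r hr)⟩
  · exact Or.inr ⟨p, hp.trans hq, fun r hr => (hpa r hr).trans (hqa r hr)⟩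
  · exact Or.inr ⟨p, (hqa p h) ▸ hp,
      fun r hr => (hpa r hr).trans (hqa r (h.trans hr))⟩

lemma lexLt_trans' {u v w : A → ℚ} (h1 : lexLt t u v) (h2 : lexLt t v w) : lexLt t u w := by
  refine ⟨lexLe_trans t h1.1 h2.1, fun h => ?_⟩
  subst h
  exact (h1.2 (lexLe_antisymm t h1.1 h2.1)).elim

end Lex

/-- Common leaf basis for a balanced stratification: let `K` be a field, `W` a `K`-vector
space, `A` a finite set, and `t i`, `i` in a nonempty finite index set, a family of linear
orders on `A` (the family `F`). Suppose for each `i` we have `V i : W \ {0} → ℚ^A` with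
(Q1) invariance under nonzero scalars, (Q2) the quasi-valuation minimum inequality,
(Q3) one-dimensional leaves, (Q4) `V i f ≤_{t i} V j f` for all `i, j`, and
(Q5) a common finite image `Γ`. Then for every `a ∈ Γ` there is a nonzero `f ∈ W` with
`V i f = a` for every `i`. -/
theorem common_leaf_basis {K W A ι : Type*} [Field K] [AddCommGroup W] [Module K W]
    [Fintype A] [Fintype ι] [Nonempty ι]
    (t : ι → LinearOrder A) (V : ι → W → (A → ℚ)) (Γ : Set (A → ℚ))
    (Q1 : ∀ (i : ι) (c : K) (f : W), c ≠ 0 → f ≠ 0 → V i (c • f) = V i f)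
    (Q2 : ∀ (i : ι) (f g : W), f ≠ 0 → g ≠ 0 → f + g ≠ 0 →
      lexLe (t i) (V i f) (V i (f + g)) ∨ lexLe (t i) (V i g) (V i (f + g)))
    (Q3 : ∀ (i : ι) (f g : W), f ≠ 0 → g ≠ 0 → V i f = V i g →
      ∃ c : K, c ≠ 0 ∧ (f = c • g ∨
        (f - c • g ≠ 0 ∧ lexLt (t i) (V i f) (V i (f - c • g)))))
    (Q4 : ∀ (i j : ι) (f : W), f ≠ 0 → lexLe (t i) (V i f) (V j f))
    (Q5fin : Γ.Finite) (Q5img : ∀ i, V i '' {f : W | f ≠ 0} = Γ) :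
    ∀ a ∈ Γ, ∃ f : W, f ≠ 0 ∧ ∀ i, V i f = a := by
  classical
  set Γfin := Q5fin.toFinset with hΓfin
  obtain ⟨i₀⟩ := ‹Nonempty ι›
  have hmemΓ : ∀ (i : ι) (f : W), f ≠ 0 → V i f ∈ Γ := by
    intro i f hf
    rw [← Q5img i]
    exact ⟨f, hf, rfl⟩
  -- rank of a value in the lex order of linearization i
  set rank : ι → (A → ℚ) → ℕ :=
    fun i x => (Γfin.filter (fun y => lexLe (t i) y x)).card with hrank
  have hrank_mono : ∀ (i : ι) (x y : A → ℚ), lexLe (t i) x y → rank i x ≤ rank i y := by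
    intro i x y hxy
    apply Finset.card_le_card
    intro z hz
    rw [Finset.mem_filter] at hz ⊢
    exact ⟨hz.1, lexLe_trans (t i) hz.2 hxy⟩
  have hrank_strict : ∀ (i : ι) (x y : A → ℚ), y ∈ Γ → lexLt (t i) x y →
      rank i x < rank i y := by
    intro i x y hy hxy
    apply Finset.card_lt_card
    constructor
    · intro z hz
      rw [Finset.mem_filter] at hz ⊢
      exact ⟨hz.1, lexLe_trans (t i) hz.2 hxy.1⟩
    · intro hsub
      have hyy : y ∈ Γfin.filter (fun z => lexLe (t i) z y) := by
        rw [Finset.mem_filter]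
        exact ⟨Q5fin.mem_toFinset.mpr hy, Or.inl rfl⟩
      have := hsub hyy
      rw [Finset.mem_filter] at this
      exact hxy.2 (lexLe_antisymm (t i) hxy.1 this.2)
  set Φ : W → ℕ := fun f => ∑ i : ι, rank i (V i f) with hΦ
  -- count of elements strictly above a in the i₀ order
  set down : (A → ℚ) → ℕ :=
    fun a => (Γfin.filter (fun b => lexLt (t i₀) a b)).card with hdown
  suffices main : ∀ (n : ℕ) (a : A → ℚ), down a < n → a ∈ Γ →
      ∃ f : W, f ≠ 0 ∧ ∀ i, V i f = a by
    intro a ha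
    exact main (down a + 1) a (Nat.lt_succ_self _) ha
  intro n
  induction n with
  | zero => intro a h; exact absurd h (Nat.not_lt_zero _)
  | succ n IH =>
    intro a hdn ha
    -- representatives of a for V i₀
    have hR : ∃ f : W, f ≠ 0 ∧ V i₀ f = a := by
      rw [← Q5img i₀] at ha
      obtain ⟨f, hf, hfa⟩ := ha
      exact ⟨f, hf, hfa⟩
    -- choose f maximizing Φ among such representatives
    set S : Set ℕ := Φ '' {f : W | f ≠ 0 ∧ V i₀ f = a} with hS
    have hSne : S.Nonempty := by
      obtain ⟨f, hf⟩ := hR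
      exact ⟨Φ f, f, hf, rfl⟩
    have hSbdd : BddAbove S := by
      refine ⟨Fintype.card ι * Γfin.card, ?_⟩
      rintro m ⟨f, -, rfl⟩
      calc Φ f ≤ ∑ _i : ι, Γfin.card :=
            Finset.sum_le_sum (fun i _ => Finset.card_filter_le _ _)
        _ = Fintype.card ι * Γfin.card := by
            rw [Finset.sum_const, Finset.card_univ, smul_eq_mul]
    obtain ⟨f, ⟨hf0, hfa⟩, hfmax⟩ : ∃ f : W, (f ≠ 0 ∧ V i₀ f = a) ∧ Φ f = sSup S := by
      obtain ⟨f, hf, hΦf⟩ := Nat.sSup_mem hSne hSbdd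
      exact ⟨f, hf, hΦf⟩
    refine ⟨f, hf0, ?_⟩
    by_contra hcon
    push_neg at hcon
    obtain ⟨j, hj⟩ := hcon
    set b := V j f with hb
    have hbΓ : b ∈ Γ := hmemΓ j f hf0
    have hab : lexLt (t i₀) a b := by
      constructor
      · rw [← hfa, hb]
        exact Q4 i₀ j f hf0
      · intro h
        exact hj (show V j f = a by rw [← hb, ← h])
    -- b is strictly higher than a, so fewer elements lie above b
    have hdb : down b < n := by
      have hlt2 : down b < down a := by
        apply Finset.card_lt_card
        constructor
        · intro z hz
          rw [Finset.mem_filter] at hz ⊢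
          exact ⟨hz.1, lexLt_trans' (t i₀) hab hz.2⟩
        · intro hsub
          have hbb : b ∈ Γfin.filter (fun c => lexLt (t i₀) a c) := by
            rw [Finset.mem_filter]
            exact ⟨Q5fin.mem_toFinset.mpr hbΓ, hab⟩
          have := hsub hbb
          rw [Finset.mem_filter] at this
          exact this.2.2 rfl
      omega
    obtain ⟨g, hg0, hgb⟩ := IH b hdb hbΓ
    obtain ⟨c, hc, hcase⟩ := Q3 j f g hf0 hg0 (by rw [hgb j, ← hb])
    rcases hcase with hfg | ⟨hh0, hlt⟩
    · -- f = c • g is impossible since V i₀ f = a ≠ b = V i₀ g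
      have hfb : V i₀ f = b := by rw [hfg, Q1 i₀ c g hc hg0, hgb i₀]
      exact hab.2 (hfa.symm.trans hfb)
    · set h : W := f - c • g with hh
      have hcg0 : c • g ≠ 0 := smul_ne_zero hc hg0
      have hVcg : ∀ i, V i (c • g) = b := fun i => by rw [Q1 i c g hc hg0, hgb i]
      have hVncg : ∀ i, V i (-(c • g)) = b := fun i => by
        rw [← neg_smul, Q1 i (-c) g (neg_ne_zero.mpr hc) hg0, hgb i]
      have hfib : ∀ i, lexLe (t i) (V i f) b := fun i => by
        rw [hb]; exact Q4 i j f hf0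
      -- V i f ≤ V i h for all i
      have hfh : ∀ i, lexLe (t i) (V i f) (V i h) := by
        intro i
        have hsum : f + -(c • g) = h := by rw [hh]; abel
        have hq2 := Q2 i f (-(c • g)) hf0 (neg_ne_zero.mpr hcg0) (by rw [hsum]; exact hh0)
        rw [hsum, hVncg i] at hq2
        rcases hq2 with h1 | h1
        · exact h1
        · exact lexLe_trans (t i) (hfib i) h1
      -- V i₀ h = a, so h is also a representative of a
      have hhi₀ : V i₀ h = a := by
        have le1 : lexLe (t i₀) a (V i₀ h) := by rw [← hfa]; exact hfh i₀
        have le2 : lexLe (t i₀) (V i₀ h) a := by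
          have hsum : h + c • g = f := by rw [hh]; abel
          have hq2 := Q2 i₀ h (c • g) hh0 hcg0 (by rw [hsum]; exact hf0)
          rw [hsum, hfa, hVcg i₀] at hq2
          rcases hq2 with h1 | h1
          · exact h1
          · exact absurd (lexLe_antisymm (t i₀) hab.1 h1) hab.2
        exact lexLe_antisymm (t i₀) le2 le1
      -- Φ h > Φ f, contradicting maximality
      have hΦlt : Φ f < Φ h := by
        apply Finset.sum_lt_sum
        · exact fun i _ => hrank_mono i (V i f) (V i h) (hfh i)
        · exact ⟨j, Finset.mem_univ j,
            hrank_strict j (V j f) (V j h) (hmemΓ j h hh0) (by rw [← hb] at hlt ⊢; exact hlt)⟩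
      have hle : Φ h ≤ sSup S := le_csSup hSbdd ⟨h, ⟨hh0, hhi₀⟩, rfl⟩
      omega
end

section
/- Let b_0, ..., b_r be positive integers, L(b) the associated LS-lattice, and LS⁺(b) := L(b) ∩ ℚ^{r+1}_{≥0} the submonoid of componentwise-nonnegative elements of L(b). Then the subgroup of ℚ^{r+1} generated by LS⁺(b) equals L(b); consequently the monoid LS⁺(b) is saturated: every componentwise-nonnegative element of the subgroup generated by LS⁺(b) already lies in LS⁺(b). (Once the fan of monoids of the quasi-valuation of the Seshadri stratification of a Schubert variety is identified with the fan of LS-monoids, this saturation is exactly the normality of the stratification.) -/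
/-- The Lakshmibai–Seshadri lattice associated to positive integers `b 0, …, b r`:
all `(a 0, …, a r) ∈ ℚ^{r+1}` such that `b j * (a j + a (j+1) + ⋯ + a r) ∈ ℤ`
for every `j`. -/
def LSlattice (r : ℕ) (b : Fin (r + 1) → ℕ) : Set (Fin (r + 1) → ℚ) :=
  {a | ∀ j : Fin (r + 1), ∃ m : ℤ, (b j : ℚ) * (∑ k ∈ Finset.Ici j, a k) = (m : ℚ)}

/-- The LS-monoid `LS⁺(b)`: the componentwise-nonnegative elements of the LS-lattice. -/
def LSmonoid (r : ℕ) (b : Fin (r + 1) → ℕ) : Set (Fin (r + 1) → ℚ) :=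
  LSlattice r b ∩ {a | ∀ k, 0 ≤ a k}

/-- The LS-lattice as an additive subgroup of `ℚ^{r+1}`. -/
def LSsubgroup (r : ℕ) (b : Fin (r + 1) → ℕ) : AddSubgroup (Fin (r + 1) → ℚ) where
  carrier := LSlattice r b
  zero_mem' := by
    intro j
    exact ⟨0, by simp⟩
  add_mem' := by
    intro a a' ha ha' j
    obtain ⟨m, hm⟩ := ha j
    obtain ⟨m', hm'⟩ := ha' j
    refine ⟨m + m', ?_⟩
    have : (∑ k ∈ Finset.Ici j, (a + a') k) =
        (∑ k ∈ Finset.Ici j, a k) + (∑ k ∈ Finset.Ici j, a' k) := by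
      simp [Finset.sum_add_distrib]
    rw [this, mul_add, hm, hm']
    push_cast; ring
  neg_mem' := by
    intro a ha j
    obtain ⟨m, hm⟩ := ha j
    refine ⟨-m, ?_⟩
    have : (∑ k ∈ Finset.Ici j, (-a) k) = -(∑ k ∈ Finset.Ici j, a k) := by
      simp [Finset.sum_neg_distrib]
    rw [this, mul_neg, hm]
    push_cast; ring

/-- Integer-valued vectors lie in the LS-lattice. -/
lemma intVec_mem_LSlattice (r : ℕ) (b : Fin (r + 1) → ℕ) (f : Fin (r + 1) → ℤ) :
    (fun k => (f k : ℚ)) ∈ LSlattice r b := by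
  intro j
  refine ⟨(b j : ℤ) * ∑ k ∈ Finset.Ici j, f k, ?_⟩
  push_cast; ring

/-- The subgroup of `ℚ^{r+1}` generated by the LS-monoid `LS⁺(b)` is the whole LS-lattice
`L(b)`; consequently the monoid `LS⁺(b)` is saturated: every componentwise-nonnegative
element of the subgroup generated by `LS⁺(b)` already lies in `LS⁺(b)`. -/
theorem LSmonoid_generates_and_saturated (r : ℕ) (b : Fin (r + 1) → ℕ)
    (hb : ∀ j, 0 < b j) :
    ((AddSubgroup.closure (LSmonoid r b) : AddSubgroup (Fin (r + 1) → ℚ)) : Set _) =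
        LSlattice r b ∧
    ∀ a : Fin (r + 1) → ℚ, a ∈ AddSubgroup.closure (LSmonoid r b) →
      (∀ k, 0 ≤ a k) → a ∈ LSmonoid r b := by
  have hclosure : ((AddSubgroup.closure (LSmonoid r b) :
      AddSubgroup (Fin (r + 1) → ℚ)) : Set _) = LSlattice r b := by
    apply Set.Subset.antisymm
    · -- closure ⊆ lattice, since the monoid lies in the lattice subgroup
      have : AddSubgroup.closure (LSmonoid r b) ≤ LSsubgroup r b :=
        (AddSubgroup.closure_le _).mpr Set.inter_subset_left
      exact this
    · -- lattice ⊆ closure: write a = (a + v) - v with v integer, nonneg, large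
      intro a ha
      set v : Fin (r + 1) → ℚ := fun k => ((⌈-(a k)⌉ ⊔ 0 : ℤ) : ℚ) with hv
      have hv_mem : v ∈ LSlattice r b := intVec_mem_LSlattice r b _
      have hv_nonneg : ∀ k, 0 ≤ v k := by
        intro k
        simp only [hv]
        exact_mod_cast le_max_right _ 0
      have hav_nonneg : ∀ k, 0 ≤ (a + v) k := by
        intro k
        have h1 : -(a k) ≤ ((⌈-(a k)⌉ ⊔ 0 : ℤ) : ℚ) := by
          calc -(a k) ≤ (⌈-(a k)⌉ : ℚ) := Int.le_ceil _
            _ ≤ _ := by exact_mod_cast le_max_left _ 0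
        have : -(a k) ≤ v k := h1
        simpa [Pi.add_apply, add_comm] using neg_le_iff_add_nonneg.mp this --  (a k) (v k) ▸ neg_le_iff_add_nonneg.mp this
      have hav_mem : a + v ∈ LSlattice r b :=
        (LSsubgroup r b).add_mem ha hv_mem
      have h1 : a + v ∈ AddSubgroup.closure (LSmonoid r b) :=
        AddSubgroup.subset_closure ⟨hav_mem, hav_nonneg⟩
      have h2 : v ∈ AddSubgroup.closure (LSmonoid r b) :=
        AddSubgroup.subset_closure ⟨hv_mem, hv_nonneg⟩
      have := sub_mem h1 h2
      simpa using this
  refine ⟨hclosure, fun a ha hnonneg => ?_⟩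
  have : a ∈ LSlattice r b := by rw [← hclosure]; exact ha
  exact ⟨this, hnonneg⟩
end
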